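/- The set {X ∈ 𝒢 : X V = V X for all V ∈ 𝒢^{(0)}} is equal to Λ_r + 𝒢^n (the sum of the subspaces Λ_r and 𝒢^n). -/

import Mathlib

open Pointwise

noncomputable section

namespace ClGA

variable (𝔽 : Type*) [RCLike 𝔽] (p q r : ℕ)

/-- The diagonal weights: `p` ones, `q` minus-ones, `r` zeros. -/
def w : Fin (p + q + r) → 𝔽 := fun i =>
  if (i : ℕ) < p then 1 else if (i : ℕ) < p + q then -1 else 0

/-- The quadratic form on `𝔽^n` whose Gram matrix is `diag(1,…,1,−1,…,−1,0,…,0)`. -/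
def Q : QuadraticForm 𝔽 (Fin (p + q + r) → 𝔽) :=
  QuadraticMap.weightedSumSquares 𝔽 (w 𝔽 p q r)

/-- The degenerate Clifford geometric algebra `𝒢 = 𝒢_{p,q,r}`. -/
abbrev G := CliffordAlgebra (Q 𝔽 p q r)

/-- The generators `e_a`, `a = 1, …, n`. -/
def e (a : Fin (p + q + r)) : G 𝔽 p q r :=
  CliffordAlgebra.ι (Q 𝔽 p q r) (Pi.single a 1)

/-- The even subspace `𝒢^{(0)}`: the `+1`-eigenspace of the grade involution. -/
def Geven : Submodule 𝔽 (G 𝔽 p q r) where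
  carrier := {x | CliffordAlgebra.involute x = x}
  add_mem' := by
    intro a b ha hb
    simp only [Set.mem_setOf_eq, map_add] at ha hb ⊢
    rw [ha, hb]
  zero_mem' := by simp
  smul_mem' := by
    intro c x hx
    simp only [Set.mem_setOf_eq, map_smul] at hx ⊢
    rw [hx]

/-- The odd subspace `𝒢^{(1)}`: the `−1`-eigenspace of the grade involution. -/
def Godd : Submodule 𝔽 (G 𝔽 p q r) where
  carrier := {x | CliffordAlgebra.involute x = -x}
  add_mem' := by
    intro a b ha hb
    simp only [Set.mem_setOf_eq, map_add] at ha hb ⊢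
    rw [ha, hb, neg_add]
  zero_mem' := by simp
  smul_mem' := by
    intro c x hx
    simp only [Set.mem_setOf_eq, map_smul] at hx ⊢
    rw [hx, smul_neg]

/-- The grade-1 subspace `𝒢^1`, the span of the generators. -/
def G1 : Submodule 𝔽 (G 𝔽 p q r) := Submodule.span 𝔽 (Set.range (e 𝔽 p q r))

/-- The scalar (grade-0) subspace `𝒢^0 = 𝔽·1`. -/
def G0 : Submodule 𝔽 (G 𝔽 p q r) := Submodule.span 𝔽 {(1 : G 𝔽 p q r)}

/-- The element `e_{1…n} = e_1 e_2 ⋯ e_n`. -/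
def eTop : G 𝔽 p q r := (List.ofFn (e 𝔽 p q r)).prod

/-- The grade-`n` subspace `𝒢^n = 𝔽·e_{1…n}`. -/
def Gn : Submodule 𝔽 (G 𝔽 p q r) := Submodule.span 𝔽 {eTop 𝔽 p q r}

/-- The Grassmann subalgebra `Λ_r` generated by the null generators. -/
def Λr : Subalgebra 𝔽 (G 𝔽 p q r) :=
  Algebra.adjoin 𝔽 {x | ∃ a : Fin (p + q + r), p + q ≤ (a : ℕ) ∧ x = e 𝔽 p q r a}

/-- `Λ_r` viewed as a subspace of `𝒢`. -/
def Λrs : Submodule 𝔽 (G 𝔽 p q r) := Subalgebra.toSubmodule (Λr 𝔽 p q r)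

/-- The even part `Λ_r^{(0)} = Λ_r ∩ 𝒢^{(0)}`. -/
def Λr0 : Submodule 𝔽 (G 𝔽 p q r) := Λrs 𝔽 p q r ⊓ Geven 𝔽 p q r

/-- The Jacobson radical `rad 𝒢` of `𝒢`: the two-sided ideal generated by the
null generators. -/
def radG : Submodule 𝔽 (G 𝔽 p q r) :=
  Submodule.span 𝔽 {x | ∃ (u v : G 𝔽 p q r) (a : Fin (p + q + r)),
    p + q ≤ (a : ℕ) ∧ x = u * e 𝔽 p q r a * v}

/-- `rad 𝒢^{(0)} = rad 𝒢 ∩ 𝒢^{(0)}`. -/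
def radG0 : Submodule 𝔽 (G 𝔽 p q r) := radG 𝔽 p q r ⊓ Geven 𝔽 p q r

/-- For a subset `S ⊆ 𝒢`, `S^×` denotes those elements of `S` invertible in `𝒢`. -/
def ux (S : Set (G 𝔽 p q r)) : Set (G 𝔽 p q r) := {x ∈ S | IsUnit x}

/-- `𝒢^{(0)×} ∪ 𝒢^{(1)×}` (the group `P^±_{p,q,r}`). -/
def Epm : Set (G 𝔽 p q r) :=
  ux 𝔽 p q r ↑(Geven 𝔽 p q r) ∪ ux 𝔽 p q r ↑(Godd 𝔽 p q r)

/-- `(T⁻¹)^̂ · T`, the grade involution of the inverse times `T`. -/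
def tw (T : G 𝔽 p q r) : G 𝔽 p q r :=
  CliffordAlgebra.involute (Ring.inverse T) * T

/-- The invertible elements `T` with `T W T⁻¹ ⊆ W` (adjoint representation). -/
def gammaAd (W : Submodule 𝔽 (G 𝔽 p q r)) : Set (G 𝔽 p q r) :=
  {T | IsUnit T ∧ ∀ U ∈ W, T * U * Ring.inverse T ∈ W}

/-- The invertible elements `T` with `T̂ W T⁻¹ ⊆ W` (twisted adjoint representation). -/
def gammaTw (W : Submodule 𝔽 (G 𝔽 p q r)) : Set (G 𝔽 p q r) :=
  {T | IsUnit T ∧ ∀ U ∈ W, CliffordAlgebra.involute T * U * Ring.inverse T ∈ W}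


variable {𝔽 p q r}

lemma Q_single (a : Fin (p+q+r)) : Q 𝔽 p q r (Pi.single a 1) = w 𝔽 p q r a := by
  rw [Q, QuadraticMap.weightedSumSquares_apply]
  rw [Finset.sum_eq_single a]
  · simp
  · intro b _ hb; simp [Pi.single_eq_of_ne hb]
  · simp

lemma e_sq (a : Fin (p+q+r)) :
    e 𝔽 p q r a * e 𝔽 p q r a = algebraMap 𝔽 _ (w 𝔽 p q r a) := by
  rw [e, CliffordAlgebra.ι_sq_scalar, Q_single]

lemma e_anti {a b : Fin (p+q+r)} (h : a ≠ b) :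
    e 𝔽 p q r a * e 𝔽 p q r b = -(e 𝔽 p q r b * e 𝔽 p q r a) := by
  have ho : (Q 𝔽 p q r).IsOrtho (Pi.single a 1) (Pi.single b 1) := by
    rw [QuadraticMap.isOrtho_def, Q_single, Q_single, Q, QuadraticMap.weightedSumSquares_apply]
    rw [Fintype.sum_eq_add a b h (by
      intro c hc
      simp only [ne_eq, Finset.mem_insert, Finset.mem_singleton, not_or] at hc
      simp [Pi.single_eq_of_ne hc.1, Pi.single_eq_of_ne hc.2])]
    simp [Pi.single_eq_of_ne h, Pi.single_eq_of_ne (Ne.symm h)]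
  have h2 := CliffordAlgebra.ι_mul_ι_add_swap_of_isOrtho ho
  rw [e, e]
  exact eq_neg_of_add_eq_zero_left h2
variable (𝔽 p q r) in
def prodE (l : List (Fin (p+q+r))) : G 𝔽 p q r := (l.map (e 𝔽 p q r)).prod

lemma prodE_nil : prodE 𝔽 p q r [] = 1 := rfl

lemma prodE_cons (a : Fin (p+q+r)) (l : List (Fin (p+q+r))) :
    prodE 𝔽 p q r (a :: l) = e 𝔽 p q r a * prodE 𝔽 p q r l := by
  simp [prodE]

/-- C1 : commuting a generator through a product. -/
lemma e_mul_prodE_comm (a : Fin (p+q+r)) (l : List (Fin (p+q+r))) :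
    e 𝔽 p q r a * prodE 𝔽 p q r l
      = ((-1:𝔽) ^ (l.countP fun b => b ≠ a)) • (prodE 𝔽 p q r l * e 𝔽 p q r a) := by
  induction l with
  | nil => simp [prodE]
  | cons b t ih =>
    rw [prodE_cons]
    by_cases hb : b = a
    · subst hb
      have hc : ((b :: t).countP fun x => x ≠ b) = (t.countP fun x => x ≠ b) := by
        simp [List.countP_cons]
      rw [hc]
      conv_rhs => rw [ih, smul_mul_assoc, smul_smul, ← mul_pow]
      norm_num
      rw [← mul_assoc, e_sq, mul_assoc, e_sq]
      exact Algebra.commutes _ _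
    · have hc : ((b :: t).countP fun x => x ≠ a) = (t.countP fun x => x ≠ a) + 1 := by
        simp [List.countP_cons, hb]
      rw [hc, ← mul_assoc, e_anti (fun h => hb h.symm), neg_mul, mul_assoc, ih]
      rw [mul_smul_comm, pow_succ, mul_neg_one, neg_smul, mul_assoc]
/-- L1 : multiplying a sorted product by a generator on the left. -/
lemma e_mul_prodE_sorted (a : Fin (p+q+r)) (l : List (Fin (p+q+r)))
    (hl : l.Pairwise (· < ·)) :
    e 𝔽 p q r a * prodE 𝔽 p q r l
      = if a ∈ l
        then (((-1:𝔽) ^ (l.countP fun b => b < a)) * w 𝔽 p q r a) • prodE 𝔽 p q r (l.erase a)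
        else ((-1:𝔽) ^ (l.countP fun b => b < a)) • prodE 𝔽 p q r (List.orderedInsert (·≤·) a l) := by
  induction l with
  | nil =>
    simp [prodE, List.orderedInsert]
  | cons b t ih =>
    have hbt : ∀ x ∈ t, b < x := fun x hx => List.rel_of_pairwise_cons hl hx
    have ht : t.Pairwise (· < ·) := hl.of_cons
    rcases lt_trichotomy a b with hab | hab | hab
    · have hmem : a ∉ b :: t := by
        intro hm
        rcases List.mem_cons.1 hm with h | h
        · exact absurd h (ne_of_lt hab)
        · exact absurd (hbt a h) (not_lt.2 (le_of_lt hab))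
      have hcnt : ((b :: t).countP fun x => x < a) = 0 := by
        rw [List.countP_eq_zero]
        intro x hx
        rcases List.mem_cons.1 hx with h | h
        · subst h; simpa using not_lt.2 (le_of_lt hab)
        · simpa using not_lt.2 (le_of_lt (lt_trans hab (hbt x h)))
      rw [if_neg hmem, hcnt]
      have : List.orderedInsert (·≤·) a (b :: t) = a :: b :: t := by
        simp [List.orderedInsert, le_of_lt hab]
      rw [this]
      simp [prodE_cons, mul_assoc]
    · subst hab
      have hmem : a ∈ a :: t := List.mem_cons_self
      have hcnt : ((a :: t).countP fun x => x < a) = 0 := by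
        rw [List.countP_eq_zero]
        intro x hx
        rcases List.mem_cons.1 hx with h | h
        · subst h; simp
        · simpa using not_lt.2 (le_of_lt (hbt x h))
      rw [if_pos hmem, hcnt, List.erase_cons_head, prodE_cons, ← mul_assoc, e_sq,
        Algebra.smul_def]
      norm_num
    · have hne : a ≠ b := ne_of_gt hab
      have hcnt : ((b :: t).countP fun x => x < a)
          = (t.countP fun x => x < a) + 1 := by
        simp [List.countP_cons, hab]
      rw [prodE_cons, ← mul_assoc, e_anti hne, neg_mul, mul_assoc, ih ht, hcnt]
      by_cases hmem : a ∈ t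
      · rw [if_pos hmem, if_pos (List.mem_cons_of_mem b hmem)]
        have her : (b :: t).erase a = b :: t.erase a :=
          List.erase_cons_tail (by simp [Ne.symm hne])
        rw [her, prodE_cons, mul_smul_comm, ← neg_smul, pow_succ]
        congr 1
        ring
      · rw [if_neg hmem, if_neg (by simp [hmem, hne] : a ∉ b :: t)]
        have hoi : List.orderedInsert (·≤·) a (b :: t)
            = b :: List.orderedInsert (·≤·) a t := by
          simp [List.orderedInsert, not_le.2 hab]
        rw [hoi, prodE_cons, mul_smul_comm, ← neg_smul, pow_succ]
        congr 1
        ring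

lemma countP_ne_nodup (a : Fin (p+q+r)) (l : List (Fin (p+q+r))) (h : l.Nodup) :
    (l.countP fun b => b ≠ a) = if a ∈ l then l.length - 1 else l.length := by
  induction l with
  | nil => simp
  | cons b t ih =>
    have hbt : b ∉ t := (List.nodup_cons.1 h).1
    have ihs := ih (List.nodup_cons.1 h).2
    by_cases hba : b = a
    · subst hba
      rw [List.countP_cons, ihs, if_neg hbt, if_pos (List.mem_cons_self)]
      simp
    · by_cases hat : a ∈ t
      · have h1 : 0 < t.length := List.length_pos_of_mem hat
        rw [List.countP_cons, ihs, if_pos hat, if_pos (show a ∈ b :: t by simp [hat])]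
        simp [hba]
        omega
      · rw [List.countP_cons, ihs, if_neg hat, if_neg (show a ∉ b :: t by
          simp only [List.mem_cons, not_or]; exact ⟨Ne.symm hba, hat⟩)]
        simp [hba]

variable (𝔽 p q r) in
def BB (A : Finset (Fin (p+q+r))) : G 𝔽 p q r := prodE 𝔽 p q r (A.sort (·≤·))

lemma BB_empty : BB 𝔽 p q r ∅ = 1 := by simp [BB, prodE]

lemma sort_erase (a : Fin (p+q+r)) (A : Finset (Fin (p+q+r))) :
    (A.sort (·≤·)).erase a = (A.erase a).sort (·≤·) := by
  apply fun h1 h2 h3 => List.Perm.eq_of_pairwise' (r := ((· ≤ ·) : Fin (p+q+r) → Fin (p+q+r) → Prop)) h2 h3 h1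
  · apply List.perm_of_nodup_nodup_toFinset_eq
    · exact (A.sort_nodup (·≤·)).erase a
    · exact Finset.sort_nodup _ _
    · ext x
      simp [List.Nodup.mem_erase_iff (A.sort_nodup (·≤·)), Finset.mem_erase, and_comm]
  · exact List.Pairwise.sublist (List.erase_sublist (a := a)) (A.pairwise_sort (·≤·))
  · exact Finset.pairwise_sort _ _

lemma sort_insert (a : Fin (p+q+r)) (A : Finset (Fin (p+q+r))) (h : a ∉ A) :
    List.orderedInsert (·≤·) a (A.sort (·≤·)) = (insert a A).sort (·≤·) := by
  apply fun h1 h2 h3 => List.Perm.eq_of_pairwise' (r := ((· ≤ ·) : Fin (p+q+r) → Fin (p+q+r) → Prop)) h2 h3 h1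
  · apply List.perm_of_nodup_nodup_toFinset_eq
    · exact (List.perm_orderedInsert _ a _).nodup_iff.2
        (List.nodup_cons.2 ⟨by simpa using h, A.sort_nodup (·≤·)⟩)
    · exact Finset.sort_nodup _ _
    · ext x
      simp [List.mem_orderedInsert, Finset.mem_insert]
  · exact List.Pairwise.orderedInsert a _ (A.pairwise_sort (·≤·))
  · exact Finset.pairwise_sort _ _

lemma symmDiff_singleton (a : Fin (p+q+r)) (A : Finset (Fin (p+q+r))) :
    symmDiff A {a} = if a ∈ A then A.erase a else insert a A := by
  by_cases h : a ∈ A <;> [rw [if_pos h]; rw [if_neg h]] <;> ext x <;>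
    by_cases hx : x = a <;> simp [Finset.mem_symmDiff, hx, h] <;> tauto

variable (𝔽) in
def lm (a : Fin (p+q+r)) (A : Finset (Fin (p+q+r))) : 𝔽 :=
  (-1) ^ ((A.sort (·≤·)).countP fun b => b < a) * (if a ∈ A then w 𝔽 p q r a else 1)

/-- M1F : left multiplication by a generator. -/
lemma e_mul_BB (a : Fin (p+q+r)) (A : Finset (Fin (p+q+r))) :
    e 𝔽 p q r a * BB 𝔽 p q r A = lm 𝔽 a A • BB 𝔽 p q r (symmDiff A {a}) := by
  rw [BB, e_mul_prodE_sorted a _ A.sortedLT_sort.pairwise, symmDiff_singleton, lm]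
  by_cases h : a ∈ A
  · rw [if_pos h, if_pos (by simpa using h), if_pos h, sort_erase, BB]
  · rw [if_neg h, if_neg (by simpa using h), if_neg h, sort_insert a A h, BB, mul_one]

variable (𝔽) in
def em (a : Fin (p+q+r)) (A : Finset (Fin (p+q+r))) : 𝔽 :=
  (-1) ^ (if a ∈ A then A.card - 1 else A.card)

lemma C1F (a : Fin (p+q+r)) (A : Finset (Fin (p+q+r))) :
    e 𝔽 p q r a * BB 𝔽 p q r A = em 𝔽 a A • (BB 𝔽 p q r A * e 𝔽 p q r a) := by
  rw [BB, e_mul_prodE_comm, countP_ne_nodup a _ (A.sort_nodup _), em]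
  congr 2
  simp [Finset.length_sort, Finset.mem_sort]

lemma em_mul_self (a : Fin (p+q+r)) (A : Finset (Fin (p+q+r))) :
    em 𝔽 a A * em 𝔽 a A = 1 := by
  rw [em, ← pow_add, ← two_mul, pow_mul]
  norm_num

lemma em_ne_zero (a : Fin (p+q+r)) (A : Finset (Fin (p+q+r))) : em 𝔽 a A ≠ 0 := by
  intro h
  have := em_mul_self (𝔽 := 𝔽) a A
  rw [h, zero_mul] at this
  exact zero_ne_one this

lemma em_mul_em {a d : Fin (p+q+r)} {A : Finset (Fin (p+q+r))}
    (ha : a ∈ A) (hd : d ∉ A) : em 𝔽 a A * em 𝔽 d A = -1 := by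
  rw [em, em, if_pos ha, if_neg hd, ← pow_add]
  have hc : 0 < A.card := Finset.card_pos.2 ⟨a, ha⟩
  have h2 : A.card - 1 + A.card = 2 * (A.card - 1) + 1 := by omega
  rw [h2, pow_succ, pow_mul]
  norm_num

variable (𝔽) in
def rmc (a : Fin (p+q+r)) (A : Finset (Fin (p+q+r))) : 𝔽 := em 𝔽 a A * lm 𝔽 a A

/-- RM : right multiplication by a generator. -/
lemma BB_mul_e (a : Fin (p+q+r)) (A : Finset (Fin (p+q+r))) :
    BB 𝔽 p q r A * e 𝔽 p q r a = rmc 𝔽 a A • BB 𝔽 p q r (symmDiff A {a}) := by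
  have h := C1F (𝔽 := 𝔽) (p := p) (q := q) (r := r) a A
  calc BB 𝔽 p q r A * e 𝔽 p q r a
      = (em 𝔽 a A * em 𝔽 a A) • (BB 𝔽 p q r A * e 𝔽 p q r a) := by
        rw [em_mul_self, one_smul]
    _ = em 𝔽 a A • (e 𝔽 p q r a * BB 𝔽 p q r A) := by rw [← smul_smul, ← h]
    _ = rmc 𝔽 a A • BB 𝔽 p q r (symmDiff A {a}) := by
        rw [e_mul_BB, smul_smul, rmc]

lemma w_null {a : Fin (p+q+r)} (h : p + q ≤ (a:ℕ)) : w 𝔽 p q r a = 0 := by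
  rw [w, if_neg (by omega), if_neg (by omega)]

lemma w_ne_zero {a : Fin (p+q+r)} (h : (a:ℕ) < p + q) : w 𝔽 p q r a ≠ 0 := by
  rw [w]
  by_cases h1 : (a:ℕ) < p
  · rw [if_pos h1]; exact one_ne_zero
  · rw [if_neg h1, if_pos h]; exact neg_ne_zero.2 one_ne_zero

lemma lm_ne_zero {a : Fin (p+q+r)} {A : Finset (Fin (p+q+r))}
    (h : a ∈ A → w 𝔽 p q r a ≠ 0) : lm 𝔽 a A ≠ 0 := by
  rw [lm]
  apply mul_ne_zero (pow_ne_zero _ (neg_ne_zero.2 one_ne_zero))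
  by_cases hm : a ∈ A
  · rw [if_pos hm]; exact h hm
  · rw [if_neg hm]; exact one_ne_zero

lemma rmc_ne_zero {a : Fin (p+q+r)} {A : Finset (Fin (p+q+r))}
    (h : a ∈ A → w 𝔽 p q r a ≠ 0) : rmc 𝔽 a A ≠ 0 :=
  mul_ne_zero (em_ne_zero a A) (lm_ne_zero h)

variable (𝔽) in
def sg (a : Fin (p+q+r)) (A : Finset (Fin (p+q+r))) : 𝔽 :=
  (-1) ^ (A.filter (· < a)).card * (if a ∈ A then 1 else w 𝔽 p q r a)

lemma filter_symmDiff_self (a : Fin (p+q+r)) (A : Finset (Fin (p+q+r))) :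
    (symmDiff A {a}).filter (· < a) = A.filter (· < a) := by
  ext x
  by_cases hx : x = a
  · subst hx; simp
  · simp only [Finset.mem_filter, Finset.mem_symmDiff, Finset.mem_singleton, hx]
    tauto

lemma mem_symmDiff_self (a : Fin (p+q+r)) (A : Finset (Fin (p+q+r))) :
    a ∈ symmDiff A {a} ↔ a ∉ A := by
  simp [Finset.mem_symmDiff]

lemma mem_symmDiff_other {a x : Fin (p+q+r)} (hx : x ≠ a) (A : Finset (Fin (p+q+r))) :
    x ∈ symmDiff A {a} ↔ x ∈ A := by
  simp [Finset.mem_symmDiff, hx]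

lemma sg_sq (a : Fin (p+q+r)) (A : Finset (Fin (p+q+r))) :
    sg 𝔽 a A * sg 𝔽 a (symmDiff A {a}) = w 𝔽 p q r a := by
  rw [sg, sg, filter_symmDiff_self]
  by_cases h : a ∈ A
  · rw [if_pos h, if_neg ((mem_symmDiff_self a A).not.2 (by simpa using h)),
      mul_mul_mul_comm, ← pow_add, ← two_mul, pow_mul]
    norm_num
  · rw [if_neg h, if_pos ((mem_symmDiff_self a A).2 h),
      mul_mul_mul_comm, ← pow_add, ← two_mul, pow_mul]
    norm_num

lemma sg_symmDiff {a b : Fin (p+q+r)} (hab : a ≠ b) (A : Finset (Fin (p+q+r))) :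
    sg 𝔽 b (symmDiff A {a}) = (if a < b then -1 else 1) * sg 𝔽 b A := by
  rw [sg, sg]
  simp only [mem_symmDiff_other (Ne.symm hab)]
  rw [symmDiff_singleton]
  by_cases ha : a ∈ A
  · rw [if_pos ha, Finset.filter_erase]
    by_cases hb : a < b
    · have hmemf : a ∈ A.filter (· < b) := Finset.mem_filter.2 ⟨ha, hb⟩
      rw [if_pos hb, Finset.card_erase_of_mem hmemf]
      have hc : 0 < (A.filter (· < b)).card := Finset.card_pos.2 ⟨a, hmemf⟩
      have h1 : (A.filter (· < b)).card = ((A.filter (· < b)).card - 1) + 1 := by omega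
      conv_rhs => rw [h1]
      rw [pow_succ]
      ring
    · rw [if_neg hb, Finset.erase_eq_of_notMem (a := a) (s := A.filter (· < b)) (fun hm => hb (Finset.mem_filter.1 hm).2)]
      ring
  · rw [if_neg ha, Finset.filter_insert]
    by_cases hb : a < b
    · rw [if_pos hb, if_pos hb,
        Finset.card_insert_of_notMem (fun hm => ha (Finset.mem_filter.1 hm).1), pow_succ]
      ring
    · rw [if_neg hb, if_neg hb]
      ring

lemma sg_anti {a b : Fin (p+q+r)} (hab : a ≠ b) (A : Finset (Fin (p+q+r))) :
    sg 𝔽 a A * sg 𝔽 b (symmDiff A {a}) + sg 𝔽 b A * sg 𝔽 a (symmDiff A {b}) = 0 := by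
  rw [sg_symmDiff hab, sg_symmDiff (Ne.symm hab)]
  rcases lt_or_gt_of_ne hab with h | h
  · rw [if_pos h, if_neg (not_lt.2 (le_of_lt h))]
    ring
  · rw [if_neg (not_lt.2 (le_of_lt h)), if_pos h]
    ring

variable (𝔽 p q r) in
def Lop (v : Fin (p+q+r) → 𝔽) :
    (Finset (Fin (p+q+r)) → 𝔽) →ₗ[𝔽] (Finset (Fin (p+q+r)) → 𝔽) where
  toFun f A := ∑ a, v a * (sg 𝔽 a A * f (symmDiff A {a}))
  map_add' f g := by
    funext A
    simp only [Pi.add_apply, mul_add, Finset.sum_add_distrib]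
  map_smul' c f := by
    funext A
    simp only [Pi.smul_apply, smul_eq_mul, RingHom.id_apply, Finset.mul_sum]
    exact Finset.sum_congr rfl fun a _ => by ring

variable (𝔽 p q r) in
def Lmap : (Fin (p+q+r) → 𝔽) →ₗ[𝔽]
    Module.End 𝔽 (Finset (Fin (p+q+r)) → 𝔽) where
  toFun := Lop 𝔽 p q r
  map_add' v v' := by
    apply LinearMap.ext; intro f; funext A
    simp only [Lop, LinearMap.coe_mk, AddHom.coe_mk, LinearMap.add_apply, Pi.add_apply,
      Pi.add_apply, add_mul, Finset.sum_add_distrib]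
  map_smul' c v := by
    apply LinearMap.ext; intro f; funext A
    simp only [Lop, LinearMap.coe_mk, AddHom.coe_mk, RingHom.id_apply, LinearMap.smul_apply,
      Pi.smul_apply, smul_eq_mul, Finset.mul_sum]
    exact Finset.sum_congr rfl fun a _ => by ring

lemma Lop_sq (v : Fin (p+q+r) → 𝔽) :
    Lop 𝔽 p q r v * Lop 𝔽 p q r v = algebraMap 𝔽 _ (Q 𝔽 p q r v) := by
  apply LinearMap.ext; intro f; funext A
  rw [Module.End.mul_apply, Module.algebraMap_end_apply]
  show ∑ a, v a * (sg 𝔽 a A * (∑ b, v b * (sg 𝔽 b (symmDiff A {a}) *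
      f (symmDiff (symmDiff A {a}) {b})))) = _
  have hterm : ∀ a, v a * (sg 𝔽 a A * (∑ b, v b * (sg 𝔽 b (symmDiff A {a}) *
      f (symmDiff (symmDiff A {a}) {b}))))
      = ∑ b, v a * v b * (sg 𝔽 a A * sg 𝔽 b (symmDiff A {a})) *
          f (symmDiff (symmDiff A {a}) {b}) := by
    intro a
    rw [Finset.mul_sum, Finset.mul_sum]
    exact Finset.sum_congr rfl fun b _ => by ring
  simp only [hterm]
  set F : Fin (p+q+r) → Fin (p+q+r) → 𝔽 := fun a b =>
    v a * v b * (sg 𝔽 a A * sg 𝔽 b (symmDiff A {a})) * f (symmDiff (symmDiff A {a}) {b})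
    with hF
  have hFd : ∀ a, F a a = w 𝔽 p q r a * (v a * v a) * f A := by
    intro a
    rw [hF]
    simp only []
    rw [symmDiff_symmDiff_cancel_right, sg_sq]
    ring
  have hanti : ∀ a b, a ≠ b → F a b + F b a = 0 := by
    intro a b hab
    have hsd : symmDiff (symmDiff A {a}) {b} = symmDiff (symmDiff A {b}) {a} := by
      rw [symmDiff_assoc, symmDiff_assoc, symmDiff_comm ({a} : Finset (Fin (p+q+r)))]
    have := sg_anti (𝔽 := 𝔽) hab A
    rw [hF]
    simp only []
    rw [hsd]
    have expand : v a * v b * (sg 𝔽 a A * sg 𝔽 b (symmDiff A {a})) *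
          f (symmDiff (symmDiff A {b}) {a})
        + v b * v a * (sg 𝔽 b A * sg 𝔽 a (symmDiff A {b})) *
          f (symmDiff (symmDiff A {b}) {a})
        = v a * v b * f (symmDiff (symmDiff A {b}) {a}) *
            (sg 𝔽 a A * sg 𝔽 b (symmDiff A {a}) + sg 𝔽 b A * sg 𝔽 a (symmDiff A {b})) := by
      ring
    rw [expand, this, mul_zero]
  have hcomm : (∑ a, ∑ b, F a b) = ∑ a, ∑ b, F b a := Finset.sum_comm
  have hdouble : (∑ a, ∑ b, F a b) + (∑ a, ∑ b, F a b) = (∑ a, F a a) + (∑ a, F a a) := by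
    nth_rewrite 1 [hcomm]
    rw [← Finset.sum_add_distrib, ← Finset.sum_add_distrib]
    apply Finset.sum_congr rfl
    intro a _
    rw [← Finset.sum_add_distrib]
    rw [Finset.sum_eq_single a (fun b _ hba => hanti b a hba)
      (fun h => absurd (Finset.mem_univ a) h)]
  have hT : (∑ a, ∑ b, F a b) = ∑ a, F a a := by
    have h2 : (2:𝔽) * (∑ a, ∑ b, F a b) = 2 * ∑ a, F a a := by
      rw [two_mul, two_mul]
      exact hdouble
    exact mul_left_cancel₀ (by norm_num : (2:𝔽) ≠ 0) h2
  rw [hT]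
  simp only [hFd]
  rw [Pi.smul_apply, smul_eq_mul, Q, QuadraticMap.weightedSumSquares_apply, Finset.sum_mul]
  exact Finset.sum_congr rfl fun a _ => by rw [smul_eq_mul]

variable (𝔽 p q r) in
def rho : G 𝔽 p q r →ₐ[𝔽] Module.End 𝔽 (Finset (Fin (p+q+r)) → 𝔽) :=
  CliffordAlgebra.lift (Q 𝔽 p q r) ⟨Lmap 𝔽 p q r, Lop_sq⟩

lemma rho_e (a : Fin (p+q+r)) :
    rho 𝔽 p q r (e 𝔽 p q r a) = Lop 𝔽 p q r (Pi.single a 1) := by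
  rw [rho, e]
  exact (CliffordAlgebra.lift_ι_apply _ _ _).trans rfl

lemma Lop_single (a : Fin (p+q+r)) (f : Finset (Fin (p+q+r)) → 𝔽) :
    Lop 𝔽 p q r (Pi.single a 1) f = fun A => sg 𝔽 a A * f (symmDiff A {a}) := by
  funext A
  show (∑ b, (Pi.single a 1 : Fin (p+q+r) → 𝔽) b * (sg 𝔽 b A * f (symmDiff A {b}))) = _
  rw [Finset.sum_eq_single a
    (fun b _ hba => by rw [Pi.single_eq_of_ne hba, zero_mul])
    (fun h => absurd (Finset.mem_univ a) h)]
  rw [Pi.single_eq_same, one_mul]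

lemma rho_prodE (l : List (Fin (p+q+r))) (hl : l.Pairwise (· < ·)) :
    rho 𝔽 p q r (prodE 𝔽 p q r l) (Pi.single ∅ 1) = Pi.single l.toFinset 1 := by
  induction l with
  | nil =>
    rw [prodE_nil, map_one, List.toFinset_nil]
    rfl
  | cons b t ih =>
    have hbt : ∀ x ∈ t.toFinset, b < x := by
      intro x hx
      exact List.rel_of_pairwise_cons hl (List.mem_toFinset.1 hx)
    have hbT : b ∉ t.toFinset := fun hm => lt_irrefl b (hbt b hm)
    rw [prodE_cons, map_mul, Module.End.mul_apply, ih hl.of_cons, rho_e, Lop_single]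
    have htf : (b :: t).toFinset = insert b t.toFinset := List.toFinset_cons
    rw [htf]
    funext A
    by_cases hA : A = insert b t.toFinset
    · subst hA
      have hsd : symmDiff (insert b t.toFinset) {b} = t.toFinset := by
        rw [symmDiff_singleton, if_pos (Finset.mem_insert_self b _), Finset.erase_insert hbT]
      rw [hsd, Pi.single_eq_same, Pi.single_eq_same, mul_one, sg]
      have hfe : (insert b t.toFinset).filter (· < b) = ∅ := by
        ext x
        simp only [Finset.mem_filter, Finset.mem_insert, Finset.notMem_empty, iff_false,
          not_and]
        rintro (rfl | hx)
        · exact lt_irrefl x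
        · exact not_lt.2 (le_of_lt (hbt x hx))
      rw [hfe, if_pos (Finset.mem_insert_self b _)]
      simp
    · have hne : symmDiff A {b} ≠ t.toFinset := by
        intro hEq
        apply hA
        have : symmDiff (symmDiff A {b}) {b} = symmDiff t.toFinset {b} := by rw [hEq]
        rw [symmDiff_symmDiff_cancel_right] at this
        rw [this, symmDiff_singleton, if_neg hbT]
      rw [Pi.single_eq_of_ne hne, Pi.single_eq_of_ne hA, mul_zero]

lemma rho_BB (A : Finset (Fin (p+q+r))) :
    rho 𝔽 p q r (BB 𝔽 p q r A) (Pi.single ∅ 1) = Pi.single A 1 := by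
  rw [BB, rho_prodE _ A.sortedLT_sort.pairwise, Finset.sort_toFinset]

variable (𝔽 p q r) in
def cmap : G 𝔽 p q r →ₗ[𝔽] (Finset (Fin (p+q+r)) → 𝔽) where
  toFun X := rho 𝔽 p q r X (Pi.single ∅ 1)
  map_add' x y := by simp only [map_add, LinearMap.add_apply]
  map_smul' c x := by simp only [map_smul, LinearMap.smul_apply, RingHom.id_apply]

lemma li_BB : LinearIndependent 𝔽 (BB 𝔽 p q r) := by
  apply LinearIndependent.of_comp (cmap 𝔽 p q r)
  have : (cmap 𝔽 p q r) ∘ (BB 𝔽 p q r) = fun A => (Pi.basisFun 𝔽 (Finset (Fin (p+q+r)))) A := by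
    funext A
    rw [Function.comp_apply, Pi.basisFun_apply]
    exact rho_BB A
  rw [this]
  exact (Pi.basisFun 𝔽 (Finset (Fin (p+q+r)))).linearIndependent

lemma ι_eq_sum (m : Fin (p+q+r) → 𝔽) :
    CliffordAlgebra.ι (Q 𝔽 p q r) m = ∑ a, m a • e 𝔽 p q r a := by
  have hm : m = ∑ a, Pi.single a (m a) := (Finset.univ_sum_single m).symm
  conv_lhs => rw [hm]
  rw [map_sum]
  apply Finset.sum_congr rfl
  intro a _
  have : Pi.single a (m a) = m a • (Pi.single a 1 : Fin (p+q+r) → 𝔽) := by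
    rw [← Pi.single_smul, smul_eq_mul, mul_one]
  rw [this, map_smul, e]

lemma BB_singleton (a : Fin (p+q+r)) : BB 𝔽 p q r {a} = e 𝔽 p q r a := by
  rw [BB, Finset.sort_singleton]
  simp [prodE]

lemma span_BB : ⊤ ≤ Submodule.span 𝔽 (Set.range (BB 𝔽 p q r)) := by
  set S := Submodule.span 𝔽 (Set.range (BB 𝔽 p q r)) with hS
  have hBB : ∀ A, BB 𝔽 p q r A ∈ S := fun A => Submodule.subset_span ⟨A, rfl⟩
  have he : ∀ (a : Fin (p+q+r)) (z : G 𝔽 p q r), z ∈ S → e 𝔽 p q r a * z ∈ S := by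
    intro a z hz
    induction hz using Submodule.span_induction with
    | mem x hx =>
      obtain ⟨A, rfl⟩ := hx
      rw [e_mul_BB]
      exact Submodule.smul_mem _ _ (hBB _)
    | zero => rw [mul_zero]; exact Submodule.zero_mem _
    | add x y _ _ hx hy => rw [mul_add]; exact Submodule.add_mem _ hx hy
    | smul c x _ hx => rw [mul_smul_comm]; exact Submodule.smul_mem _ _ hx
  have hprod : ∀ (l : List (Fin (p+q+r))) (z : G 𝔽 p q r), z ∈ S →
      prodE 𝔽 p q r l * z ∈ S := by
    intro l
    induction l with
    | nil => intro z hz; rw [prodE_nil, one_mul]; exact hz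
    | cons b t ih =>
      intro z hz
      rw [prodE_cons, mul_assoc]
      exact he b _ (ih _ hz)
  have hmul : ∀ x y : G 𝔽 p q r, x ∈ S → y ∈ S → x * y ∈ S := by
    intro x y hx hy
    induction hx using Submodule.span_induction with
    | mem u hu =>
      obtain ⟨A, rfl⟩ := hu
      rw [BB]
      exact hprod _ _ hy
    | zero => rw [zero_mul]; exact Submodule.zero_mem _
    | add u u' _ _ hu hu' => rw [add_mul]; exact Submodule.add_mem _ hu hu'
    | smul c u _ hu => rw [smul_mul_assoc]; exact Submodule.smul_mem _ _ hu
  intro x hx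
  clear hx
  induction x using CliffordAlgebra.induction with
  | algebraMap c =>
    rw [Algebra.algebraMap_eq_smul_one]
    exact Submodule.smul_mem _ _ (by rw [← BB_empty (𝔽 := 𝔽) (p := p) (q := q) (r := r)]; exact hBB ∅)
  | ι m =>
    rw [ι_eq_sum]
    apply Submodule.sum_mem
    intro a _
    exact Submodule.smul_mem _ _ (by rw [← BB_singleton a]; exact hBB {a})
  | mul x y hx hy => exact hmul x y hx hy
  | add x y hx hy => exact Submodule.add_mem _ hx hy

variable (𝔽 p q r) in
def Bas : Module.Basis (Finset (Fin (p+q+r))) 𝔽 (G 𝔽 p q r) := Module.Basis.mk li_BB span_BB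

lemma Bas_apply (A : Finset (Fin (p+q+r))) : Bas 𝔽 p q r A = BB 𝔽 p q r A :=
  Module.Basis.mk_apply _ _ _

lemma key {a d : Fin (p+q+r)} (had : a ≠ d) {A : Finset (Fin (p+q+r))}
    (ha : a ∈ A) (hd : d ∉ A) (hwa : w 𝔽 p q r a ≠ 0) {X : G 𝔽 p q r}
    (hc : X * (e 𝔽 p q r a * e 𝔽 p q r d) = (e 𝔽 p q r a * e 𝔽 p q r d) * X) :
    (Bas 𝔽 p q r).repr X A = 0 := by
  set V := e 𝔽 p q r a * e 𝔽 p q r d with hV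
  set g : Finset (Fin (p+q+r)) → Finset (Fin (p+q+r)) :=
    fun A' => symmDiff (symmDiff A' {a}) {d} with hg
  set cf : Finset (Fin (p+q+r)) → 𝔽 :=
    fun A' => (1 - em 𝔽 d A' * em 𝔽 a A') * (rmc 𝔽 a A' * rmc 𝔽 d (symmDiff A' {a})) with hcf
  set x : Finset (Fin (p+q+r)) → 𝔽 := fun A' => (Bas 𝔽 p q r).repr X A' with hx
  have hginj : Function.Injective g := by
    intro A1 A2 h
    exact symmDiff_left_injective _ (symmDiff_left_injective _ h)
  have hBV : ∀ A', BB 𝔽 p q r A' * V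
      = (rmc 𝔽 a A' * rmc 𝔽 d (symmDiff A' {a})) • BB 𝔽 p q r (g A') := by
    intro A'
    rw [hV, ← mul_assoc, BB_mul_e, smul_mul_assoc, BB_mul_e, smul_smul]
  have hVB : ∀ A', V * BB 𝔽 p q r A'
      = ((em 𝔽 d A' * em 𝔽 a A') * (rmc 𝔽 a A' * rmc 𝔽 d (symmDiff A' {a})))
        • BB 𝔽 p q r (g A') := by
    intro A'
    calc V * BB 𝔽 p q r A' = e 𝔽 p q r a * (e 𝔽 p q r d * BB 𝔽 p q r A') := mul_assoc _ _ _
      _ = em 𝔽 d A' • (e 𝔽 p q r a * (BB 𝔽 p q r A' * e 𝔽 p q r d)) := by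
          rw [C1F, mul_smul_comm]
      _ = em 𝔽 d A' • ((e 𝔽 p q r a * BB 𝔽 p q r A') * e 𝔽 p q r d) := by rw [mul_assoc]
      _ = em 𝔽 d A' • ((em 𝔽 a A' • (BB 𝔽 p q r A' * e 𝔽 p q r a)) * e 𝔽 p q r d) := by
          rw [C1F]
      _ = (em 𝔽 d A' * em 𝔽 a A') • (BB 𝔽 p q r A' * e 𝔽 p q r a * e 𝔽 p q r d) := by
          rw [smul_mul_assoc, smul_smul]
      _ = ((em 𝔽 d A' * em 𝔽 a A') * (rmc 𝔽 a A' * rmc 𝔽 d (symmDiff A' {a})))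
            • BB 𝔽 p q r (g A') := by
          rw [mul_assoc, ← hV, hBV A', smul_smul]
  have hcomm : ∀ A', BB 𝔽 p q r A' * V - V * BB 𝔽 p q r A' = cf A' • BB 𝔽 p q r (g A') := by
    intro A'
    rw [hBV, hVB, ← sub_smul, hcf]
    congr 1
    ring
  have hsum : X = ∑ A', x A' • BB 𝔽 p q r A' := by
    conv_lhs => rw [← Module.Basis.sum_repr (Bas 𝔽 p q r) X]
    exact Finset.sum_congr rfl fun A' _ => by rw [Bas_apply]
  have h0 : (0 : G 𝔽 p q r) = ∑ A', (x A' * cf A') • BB 𝔽 p q r (g A') := by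
    have h1 : X * V - V * X = 0 := by rw [hc, sub_self]
    calc (0 : G 𝔽 p q r) = X * V - V * X := h1.symm
      _ = (∑ A', x A' • BB 𝔽 p q r A') * V - V * (∑ A', x A' • BB 𝔽 p q r A') := by
          rw [← hsum]
      _ = ∑ A', (x A' • (BB 𝔽 p q r A' * V) - x A' • (V * BB 𝔽 p q r A')) := by
          rw [Finset.sum_mul, Finset.mul_sum, ← Finset.sum_sub_distrib]
          exact Finset.sum_congr rfl fun A' _ => by
            rw [smul_mul_assoc, mul_smul_comm]
      _ = ∑ A', (x A' * cf A') • BB 𝔽 p q r (g A') := by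
          exact Finset.sum_congr rfl fun A' _ => by
            rw [← smul_sub, hcomm, smul_smul]
  set φ : G 𝔽 p q r →ₗ[𝔽] 𝔽 :=
    (Finsupp.lapply (g A)).comp (Bas 𝔽 p q r).repr.toLinearMap with hφ
  have h2 := congrArg φ h0
  rw [map_zero, map_sum] at h2
  have h3 : ∀ A', φ ((x A' * cf A') • BB 𝔽 p q r (g A'))
      = (x A' * cf A') * (if g A' = g A then 1 else 0) := by
    intro A'
    simp only [hφ, LinearMap.comp_apply, LinearEquiv.coe_coe, map_smul,
      Finsupp.lapply_apply, Finsupp.smul_apply, smul_eq_mul, ← Bas_apply,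
      Module.Basis.repr_self_apply]
  simp only [h3] at h2
  rw [Finset.sum_eq_single A
    (fun b _ hb => by rw [if_neg (fun h => hb (hginj h)), mul_zero])
    (fun h => absurd (Finset.mem_univ A) h), if_pos rfl, mul_one] at h2
  have hcfA : cf A ≠ 0 := by
    rw [hcf]
    have hem : em 𝔽 d A * em 𝔽 a A = -1 := by
      rw [mul_comm]; exact em_mul_em ha hd
    apply mul_ne_zero
    · rw [hem]; norm_num
    · exact mul_ne_zero (rmc_ne_zero fun _ => hwa)
        (rmc_ne_zero fun hm => absurd ((mem_symmDiff_other (Ne.symm had) A).1 hm) hd)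
  exact (mul_eq_zero.1 h2.symm).resolve_right hcfA

lemma polar_single_null {c : Fin (p+q+r)} (hc : p + q ≤ (c:ℕ)) (m : Fin (p+q+r) → 𝔽) :
    QuadraticMap.polar (Q 𝔽 p q r) (Pi.single c 1) m = 0 := by
  rw [QuadraticMap.polar, Q, QuadraticMap.weightedSumSquares_apply,
    QuadraticMap.weightedSumSquares_apply, QuadraticMap.weightedSumSquares_apply,
    ← Finset.sum_sub_distrib, ← Finset.sum_sub_distrib]
  apply Finset.sum_eq_zero
  intro i _
  by_cases hi : i = c
  · subst hi
    rw [w_null hc]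
    simp
  · rw [Pi.add_apply, Pi.single_eq_of_ne hi]
    simp


lemma e_null_swap {c : Fin (p+q+r)} (hc : p + q ≤ (c:ℕ)) (V : G 𝔽 p q r) :
    e 𝔽 p q r c * V = CliffordAlgebra.involute V * e 𝔽 p q r c := by
  induction V using CliffordAlgebra.induction with
  | algebraMap t =>
    rw [AlgHom.commutes]
    exact (Algebra.commutes t _).symm
  | ι m =>
    have h := CliffordAlgebra.ι_mul_ι_add_swap (Q := Q 𝔽 p q r) (Pi.single c 1) m
    rw [polar_single_null hc, map_zero] at h
    rw [CliffordAlgebra.involute_ι, neg_mul, e]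
    exact eq_neg_of_add_eq_zero_left h
  | mul x y hx hy => rw [← mul_assoc, hx, mul_assoc, hy, ← mul_assoc, map_mul]
  | add x y hx hy => rw [mul_add, hx, hy, map_add, add_mul]

lemma ee_even (a d : Fin (p+q+r)) : e 𝔽 p q r a * e 𝔽 p q r d ∈ Geven 𝔽 p q r := by
  show CliffordAlgebra.involute (e 𝔽 p q r a * e 𝔽 p q r d) = e 𝔽 p q r a * e 𝔽 p q r d
  rw [map_mul, e, e, CliffordAlgebra.involute_ι, CliffordAlgebra.involute_ι, neg_mul_neg]

lemma Λr_even_comm {Y : G 𝔽 p q r} (hY : Y ∈ Λr 𝔽 p q r) :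
    ∀ V : G 𝔽 p q r, CliffordAlgebra.involute V = V → Y * V = V * Y := by
  induction hY using Algebra.adjoin_induction with
  | mem x hx =>
    obtain ⟨c, hc, rfl⟩ := hx
    intro V hV
    rw [e_null_swap hc V, hV]
  | algebraMap t =>
    intro V hV
    exact Algebra.commutes t V
  | add x y hx hy hpx hpy =>
    intro V hV
    rw [add_mul, hpx V hV, hpy V hV, mul_add]
  | mul x y hx hy hpx hpy =>
    intro V hV
    rw [mul_assoc, hpy V hV, ← mul_assoc, hpx V hV, mul_assoc]

lemma eTop_eq_prodE : eTop 𝔽 p q r = prodE 𝔽 p q r (List.finRange (p+q+r)) := by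
  rw [eTop, prodE, List.ofFn_eq_map]

lemma eTop_BB : eTop 𝔽 p q r = BB 𝔽 p q r Finset.univ := by
  rw [eTop_eq_prodE, BB, Fin.sort_univ]

lemma e_mul_eTop (a : Fin (p+q+r)) :
    e 𝔽 p q r a * eTop 𝔽 p q r
      = ((-1:𝔽) ^ (p+q+r-1)) • (eTop 𝔽 p q r * e 𝔽 p q r a) := by
  rw [eTop_eq_prodE, e_mul_prodE_comm,
    countP_ne_nodup a _ (List.nodup_finRange _), if_pos (List.mem_finRange a),
    List.length_finRange]

lemma eTop_mul_e (a : Fin (p+q+r)) :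
    eTop 𝔽 p q r * e 𝔽 p q r a
      = ((-1:𝔽) ^ (p+q+r-1)) • (e 𝔽 p q r a * eTop 𝔽 p q r) := by
  have h := e_mul_eTop (𝔽 := 𝔽) (p := p) (q := q) (r := r) a
  have hss : ((-1:𝔽) ^ (p+q+r-1)) * ((-1:𝔽) ^ (p+q+r-1)) = 1 := by
    rw [← pow_add, ← two_mul, pow_mul]
    norm_num
  calc eTop 𝔽 p q r * e 𝔽 p q r a
      = (((-1:𝔽) ^ (p+q+r-1)) * ((-1:𝔽) ^ (p+q+r-1)))
          • (eTop 𝔽 p q r * e 𝔽 p q r a) := by rw [hss, one_smul]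
    _ = ((-1:𝔽) ^ (p+q+r-1)) • (e 𝔽 p q r a * eTop 𝔽 p q r) := by
        rw [← smul_smul, ← h]

lemma eTop_mul_ι (m : Fin (p+q+r) → 𝔽) :
    eTop 𝔽 p q r * CliffordAlgebra.ι (Q 𝔽 p q r) m
      = ((-1:𝔽) ^ (p+q+r-1)) • (CliffordAlgebra.ι (Q 𝔽 p q r) m * eTop 𝔽 p q r) := by
  rw [ι_eq_sum, Finset.mul_sum, Finset.sum_mul, Finset.smul_sum]
  apply Finset.sum_congr rfl
  intro a _
  rw [mul_smul_comm, eTop_mul_e, smul_mul_assoc, smul_smul, smul_smul, mul_comm]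

lemma eTop_comm (V : G 𝔽 p q r) (hV : CliffordAlgebra.involute V = V) :
    eTop 𝔽 p q r * V = V * eTop 𝔽 p q r := by
  rcases Nat.even_or_odd (p+q+r-1) with hev | hod
  · have hs : ((-1:𝔽) ^ (p+q+r-1)) = 1 := hev.neg_one_pow
    clear hV
    induction V using CliffordAlgebra.induction with
    | algebraMap t => exact (Algebra.commutes t _).symm
    | ι m => rw [eTop_mul_ι, hs, one_smul]
    | mul x y hx hy => rw [← mul_assoc, hx, mul_assoc, hy, ← mul_assoc]
    | add x y hx hy => rw [mul_add, hx, hy, add_mul]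
  · have hs : ((-1:𝔽) ^ (p+q+r-1)) = -1 := hod.neg_one_pow
    have hmain : ∀ U : G 𝔽 p q r,
        eTop 𝔽 p q r * U = CliffordAlgebra.involute U * eTop 𝔽 p q r := by
      intro U
      induction U using CliffordAlgebra.induction with
      | algebraMap t =>
        rw [AlgHom.commutes]
        exact (Algebra.commutes t _).symm
      | ι m =>
        rw [eTop_mul_ι, hs, CliffordAlgebra.involute_ι, neg_smul, one_smul, neg_mul]
      | mul x y hx hy =>
        rw [← mul_assoc, hx, mul_assoc, hy, ← mul_assoc, map_mul]
      | add x y hx hy => rw [mul_add, hx, hy, map_add, add_mul]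
    rw [hmain V, hV]

variable (𝔽 p q r)

/-- `{X ∈ 𝒢 : X V = V X for all V ∈ 𝒢^{(0)}} = Λ_r + 𝒢^n`. -/
theorem stmt2 (hn : 1 ≤ p + q + r) :
    {X : G 𝔽 p q r | ∀ V ∈ Geven 𝔽 p q r, X * V = V * X}
      = ↑(Λrs 𝔽 p q r ⊔ Gn 𝔽 p q r) := by
  ext X
  simp only [Set.mem_setOf_eq, SetLike.mem_coe]
  constructor
  · intro hX
    have hXc : ∀ A : Finset (Fin (p+q+r)), (Bas 𝔽 p q r).repr X A ≠ 0 →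
        ((∀ i ∈ A, p + q ≤ (i:ℕ)) ∨ A = Finset.univ) := by
      intro A hA
      by_cases hnn : ∃ a ∈ A, (a:ℕ) < p + q
      · right
        obtain ⟨a, haA, halt⟩ := hnn
        apply Finset.eq_univ_iff_forall.2
        intro j
        by_contra hj
        have hja : a ≠ j := fun h => hj (h ▸ haA)
        have hcomm : X * (e 𝔽 p q r a * e 𝔽 p q r j)
            = (e 𝔽 p q r a * e 𝔽 p q r j) * X := hX _ (ee_even a j)
        exact hA (key hja haA hj (w_ne_zero halt) hcomm)
      · left
        push_neg at hnn
        intro i hi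
        exact hnn i hi
    rw [← Module.Basis.sum_repr (Bas 𝔽 p q r) X]
    apply Submodule.sum_mem
    intro A _
    by_cases hz : (Bas 𝔽 p q r).repr X A = 0
    · rw [hz, zero_smul]
      exact Submodule.zero_mem _
    · rcases hXc A hz with hnull | huniv
      · apply Submodule.mem_sup_left
        apply Submodule.smul_mem
        rw [Bas_apply]
        show BB 𝔽 p q r A ∈ Subalgebra.toSubmodule (Λr 𝔽 p q r)
        rw [Subalgebra.mem_toSubmodule, BB]
        apply Subalgebra.list_prod_mem
        intro x hx
        rw [List.mem_map] at hx
        obtain ⟨i, hi, rfl⟩ := hx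
        apply Algebra.subset_adjoin
        exact ⟨i, hnull i ((Finset.mem_sort (α := Fin (p+q+r)) (·≤·)).1 hi), rfl⟩
      · apply Submodule.mem_sup_right
        apply Submodule.smul_mem
        rw [Bas_apply, huniv, ← eTop_BB]
        exact Submodule.mem_span_singleton_self _
  · intro hmem V hV
    obtain ⟨y, hy, z, hz, rfl⟩ := Submodule.mem_sup.1 hmem
    have hVe : CliffordAlgebra.involute V = V := hV
    have h1 : y * V = V * y := Λr_even_comm ((Subalgebra.mem_toSubmodule _).1 hy) V hVe
    have h2 : z * V = V * z := by
      rw [Gn, Submodule.mem_span_singleton] at hz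
      obtain ⟨t, rfl⟩ := hz
      rw [smul_mul_assoc, mul_smul_comm, eTop_comm V hVe]
    rw [add_mul, mul_add, h1, h2]


end ClGA
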